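/- Let α_IA, α_UI ∈ [0,1] and σ_IA, σ_UI ≥ 0 be real numbers, and let h_n and g_n be complex numbers. Define δ1 = √(α_IA(1−α_IA)α_UI(1−α_UI))·σ_IA·σ_UI, δ2 = α_IA·α_UI·σ_IA^2·σ_UI^2, and the cascaded coefficient c_n = h_n·g_n (the product of the two channel coefficients). Then the CGA-II variance δ1·(|Re(c_n)| + |Im(c_n)|) + δ2 is a lower bound on the CGA-I variance: δ1·(|Re(c_n)| + |Im(c_n)|) + δ2 ≤ α_IA(1−α_UI)·σ_IA^2·|h_n|^2 + α_UI(1−α_IA)·σ_UI^2·|g_n|^2 + δ2. -/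

import Mathlib

/-- The CGA-II surrogate variance lower-bounds the CGA-I variance: with
`δ1 = √(α_IA(1−α_IA)α_UI(1−α_UI))·σ_IA·σ_UI`, `δ2 = α_IA α_UI σ_IA^2 σ_UI^2`, and
the cascaded coefficient `c_n = h_n g_n`,
`δ1(|Re(c_n)| + |Im(c_n)|) + δ2 ≤ α_IA(1−α_UI)σ_IA^2|h_n|^2 + α_UI(1−α_IA)σ_UI^2|g_n|^2 + δ2`. -/
theorem cga2_var_le_cga1_var
    (αIA αUI : ℝ) (hαIA : αIA ∈ Set.Icc (0 : ℝ) 1) (hαUI : αUI ∈ Set.Icc (0 : ℝ) 1)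
    (σIA σUI : ℝ) (hσIA : 0 ≤ σIA) (hσUI : 0 ≤ σUI)
    (hn gn : ℂ)
    (δ1 δ2 : ℝ) (cn : ℂ)
    (hδ1 : δ1 = Real.sqrt (αIA * (1 - αIA) * αUI * (1 - αUI)) * σIA * σUI)
    (hδ2 : δ2 = αIA * αUI * σIA ^ 2 * σUI ^ 2)
    (hcn : cn = hn * gn) :
    δ1 * (|cn.re| + |cn.im|) + δ2 ≤
      αIA * (1 - αUI) * σIA ^ 2 * ‖hn‖ ^ 2 +
        αUI * (1 - αIA) * σUI ^ 2 * ‖gn‖ ^ 2 + δ2 := by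
  obtain ⟨h0, h1⟩ := hαIA
  obtain ⟨g0, g1⟩ := hαUI
  have hA : (0:ℝ) ≤ αIA * (1 - αUI) := mul_nonneg h0 (by linarith)
  have hB : (0:ℝ) ≤ αUI * (1 - αIA) := mul_nonneg g0 (by linarith)
  have hsplit : Real.sqrt (αIA * (1 - αIA) * αUI * (1 - αUI)) =
      Real.sqrt (αIA * (1 - αUI)) * Real.sqrt (αUI * (1 - αIA)) := by
    rw [← Real.sqrt_mul hA]
    congr 1
    ring
  set x : ℝ := Real.sqrt (αIA * (1 - αUI)) * σIA * ‖hn‖ with hx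
  set y : ℝ := Real.sqrt (αUI * (1 - αIA)) * σUI * ‖gn‖ with hy
  have hx2 : x ^ 2 = αIA * (1 - αUI) * σIA ^ 2 * ‖hn‖ ^ 2 := by
    rw [hx]
    rw [mul_pow, mul_pow, Real.sq_sqrt hA]
  have hy2 : y ^ 2 = αUI * (1 - αIA) * σUI ^ 2 * ‖gn‖ ^ 2 := by
    rw [hy]
    rw [mul_pow, mul_pow, Real.sq_sqrt hB]
  have hxy : δ1 * ‖cn‖ = x * y := by
    rw [hδ1, hsplit, hcn, norm_mul, hx, hy]
    ring
  have hre : |cn.re| ≤ ‖cn‖ := Complex.abs_re_le_norm cn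
  have him : |cn.im| ≤ ‖cn‖ := Complex.abs_im_le_norm cn
  have hδ1nn : 0 ≤ δ1 := by
    rw [hδ1]
    exact mul_nonneg (mul_nonneg (Real.sqrt_nonneg _) hσIA) hσUI
  have hamgm : 2 * (x * y) ≤ x ^ 2 + y ^ 2 := by nlinarith [sq_nonneg (x - y)]
  have h2 : δ1 * (|cn.re| + |cn.im|) ≤ 2 * (δ1 * ‖cn‖) := by
    nlinarith
  linarith [hxy ▸ hamgm, hxy ▸ h2, hx2, hy2]
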